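/- Let m ≥ 1, n ≥ 1, and let h : [m] → [n] be a function whose image has size at most k, and let ℓ be an integer with 1 ≤ ℓ ≤ k. Then there exists a function h′ : [m] → [n] whose image has size at most ℓ such that |{z ∈ [m] : h(z) ≠ h′(z)}| ≤ ((k − ℓ)/k)·m. -/

import Mathlib

open scoped Classical

theorem stmt14 (m n k ℓ : ℕ) (hm : 1 ≤ m) (hn : 1 ≤ n) (hℓ : 1 ≤ ℓ) (hℓk : ℓ ≤ k)
    (h : Fin m → Fin n) (hh : (Finset.univ.image h).card ≤ k) :
    ∃ h' : Fin m → Fin n, (Finset.univ.image h').card ≤ ℓ ∧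
      ((Finset.univ.filter (fun z : Fin m => h z ≠ h' z)).card : ℝ)
        ≤ (((k:ℝ) - ℓ) / k) * m := by
  have hk1 : 1 ≤ k := le_trans hℓ hℓk
  have hk0 : (0:ℝ) < k := by exact_mod_cast hk1
  have hrhs0 : (0:ℝ) ≤ (((k:ℝ) - ℓ) / k) * m := by
    apply mul_nonneg
    · apply div_nonneg _ (le_of_lt hk0)
      have : (ℓ:ℝ) ≤ k := by exact_mod_cast hℓk
      linarith
    · positivity
  set S := Finset.univ.image h with hS
  by_cases hcase : S.card ≤ ℓ
  · refine ⟨h, hcase, ?_⟩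
    have : (Finset.univ.filter (fun z : Fin m => h z ≠ h z)) = ∅ := by
      apply Finset.filter_false_of_mem; intro x _ hx; exact hx rfl
    rw [this]
    simpa using hrhs0
  push_neg at hcase
  -- fiber sizes
  set a : Fin n → ℕ := fun y => (Finset.univ.filter (fun z => h z = y)).card with ha
  have hsum : ∑ y ∈ S, a y = m := by
    have := Finset.card_eq_sum_card_fiberwise
      (f := h) (s := Finset.univ) (t := S)
      (fun x _ => Finset.mem_image_of_mem h (Finset.mem_univ x))
    simpa [ha] using this.symm
  -- choose the ℓ most popular outputs
  have hpow : (S.powersetCard ℓ).Nonempty :=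
    Finset.powersetCard_nonempty.2 (le_of_lt hcase)
  obtain ⟨T, hTmem, hTmax⟩ :=
    Finset.exists_max_image (S.powersetCard ℓ) (fun T => ∑ y ∈ T, a y) hpow
  obtain ⟨hTS, hTcard⟩ := Finset.mem_powersetCard.1 hTmem
  have hTne : T.Nonempty := by
    rw [← Finset.card_pos, hTcard]; exact hℓ
  obtain ⟨t₀, ht₀T, ht₀min⟩ := Finset.exists_min_image T a hTne
  -- every fiber outside T is at most the minimum fiber in T
  have hkey : ∀ y ∈ S \ T, a y ≤ a t₀ := by
    intro y hy
    rw [Finset.mem_sdiff] at hy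
    obtain ⟨hyS, hyT⟩ := hy
    set T' := insert y (T.erase t₀) with hT'
    have hyerase : y ∉ T.erase t₀ := fun hc => hyT (Finset.mem_of_mem_erase hc)
    have hT'card : T'.card = ℓ := by
      rw [hT', Finset.card_insert_of_notMem hyerase,
        Finset.card_erase_of_mem ht₀T, hTcard]
      omega
    have hT'S : T' ⊆ S := by
      intro x hx
      rcases Finset.mem_insert.1 hx with rfl | hx
      · exact hyS
      · exact hTS (Finset.mem_of_mem_erase hx)
    have hT'mem : T' ∈ S.powersetCard ℓ := Finset.mem_powersetCard.2 ⟨hT'S, hT'card⟩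
    have hle := hTmax T' hT'mem
    have hsumT' : ∑ x ∈ T', a x = a y + ∑ x ∈ T.erase t₀, a x :=
      Finset.sum_insert hyerase
    have hsumT : ∑ x ∈ T, a x = a t₀ + ∑ x ∈ T.erase t₀, a x :=
      (Finset.add_sum_erase T a ht₀T).symm
    omega
  set A := ∑ y ∈ T, a y with hA
  set B := ∑ y ∈ S \ T, a y with hB
  have hAB : B + A = m := by
    rw [hB, hA, Finset.sum_sdiff hTS, hsum]
  have h1 : ℓ * a t₀ ≤ A := by
    have := Finset.card_nsmul_le_sum T a (a t₀) ht₀min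
    simpa [hTcard, hA] using this
  have h2 : B ≤ (S.card - ℓ) * a t₀ := by
    have := Finset.sum_le_card_nsmul (S \ T) a (a t₀) hkey
    have hcard : (S \ T).card = S.card - ℓ := by
      rw [Finset.card_sdiff_of_subset hTS, hTcard]
    simpa [hcard, hB] using this
  -- key natural-number inequality: B * k ≤ (k - ℓ) * m
  have hs : S.card ≤ k := hh
  have hmain : B * k ≤ (k - ℓ) * m := by
    have e1 : ℓ * B ≤ (S.card - ℓ) * A := by
      calc ℓ * B ≤ ℓ * ((S.card - ℓ) * a t₀) := Nat.mul_le_mul_left _ h2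
        _ = (S.card - ℓ) * (ℓ * a t₀) := by ring
        _ ≤ (S.card - ℓ) * A := Nat.mul_le_mul_left _ h1
    have e2 : S.card - ℓ ≤ k - ℓ := by omega
    calc B * k = ℓ * B + (k - ℓ) * B := by
          rw [← Nat.add_sub_cancel' hℓk]; ring_nf; rw [Nat.add_sub_cancel_left]
      _ ≤ (S.card - ℓ) * A + (k - ℓ) * B := by omega
      _ ≤ (k - ℓ) * A + (k - ℓ) * B := by
          exact Nat.add_le_add_right (Nat.mul_le_mul_right _ e2) _
      _ = (k - ℓ) * m := by rw [← Nat.mul_add, Nat.add_comm A B, hAB]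
  -- define h'
  obtain ⟨y₀, hy₀⟩ := hTne
  refine ⟨fun z => if h z ∈ T then h z else y₀, ?_, ?_⟩
  · calc (Finset.univ.image fun z => if h z ∈ T then h z else y₀).card
        ≤ T.card := by
          apply Finset.card_le_card
          intro y hy
          obtain ⟨z, _, hz⟩ := Finset.mem_image.1 hy
          by_cases hc : h z ∈ T
          · simp only [hc, if_true] at hz; exact hz ▸ hc
          · simp only [hc, if_false] at hz; exact hz ▸ hy₀
      _ = ℓ := hTcard
  · -- the diff set is contained in fibers over S \ T, with total size B
    have hsub : (Finset.univ.filter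
        (fun z : Fin m => h z ≠ if h z ∈ T then h z else y₀)) ⊆
        Finset.univ.filter (fun z => h z ∉ T) := by
      intro z hz
      rw [Finset.mem_filter] at hz ⊢
      refine ⟨Finset.mem_univ z, fun hc => ?_⟩
      rw [if_pos hc] at hz
      exact hz.2 rfl
    have hcardB : (Finset.univ.filter (fun z : Fin m => h z ∉ T)).card = B := by
      have hfib := Finset.card_eq_sum_card_fiberwise
        (f := h) (s := Finset.univ.filter (fun z => h z ∉ T)) (t := S \ T)
        (fun x hx => by
          rw [Finset.mem_coe, Finset.mem_filter] at hx
          exact Finset.mem_coe.2 (Finset.mem_sdiff.2 ⟨Finset.mem_image_of_mem h (Finset.mem_univ x), hx.2⟩))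
      rw [hfib, hB]
      apply Finset.sum_congr rfl
      intro y hy
      rw [Finset.mem_sdiff] at hy
      congr 1
      ext z
      simp only [Finset.mem_filter, Finset.mem_univ, true_and]
      constructor
      · exact fun hz => hz.2
      · intro hz; exact ⟨hz ▸ hy.2, hz⟩
    have hle : (Finset.univ.filter
        (fun z : Fin m => h z ≠ if h z ∈ T then h z else y₀)).card ≤ B := by
      rw [← hcardB]; exact Finset.card_le_card hsub
    have hcast : ((k - ℓ : ℕ) : ℝ) = (k:ℝ) - ℓ := by
      push_cast [Nat.cast_sub hℓk]; ring
    rw [div_mul_eq_mul_div, le_div_iff₀ hk0]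
    have hmainR : (B:ℝ) * k ≤ ((k:ℝ) - ℓ) * m := by
      have := hmain
      have : ((B * k : ℕ) : ℝ) ≤ (((k - ℓ) * m : ℕ) : ℝ) := by exact_mod_cast this
      push_cast [Nat.cast_sub hℓk] at this
      linarith
    have hleR : ((Finset.univ.filter
        (fun z : Fin m => h z ≠ if h z ∈ T then h z else y₀)).card : ℝ) ≤ B := by
      exact_mod_cast hle
    nlinarith [hk0]
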